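/- Let δ and t be real numbers with 0 < δ ≤ 1/3 and 0 < t ≤ 1/(1 + 3δ²), let α, β be real numbers, and let x be a real number such that the fractional parts of x − α and of x − β both lie in [δ, 1 − δ]. Then (1/π) |∑_{n=1}^{∞} (1 − t^n)[sin(2πn(x − α)) − sin(2πn(x − β))]/n| ≤ (1/δ)(1/t − 1). -/

import Mathlib

set_option maxHeartbeats 1000000

open Real

lemma abs_arctan_le_abs (x : ℝ) : |arctan x| ≤ |x| := by
  have key : ∀ y : ℝ, 0 ≤ y → arctan y ≤ y := fun y hy => by
    nth_rewrite 2 [← tan_arctan y]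
    exact le_tan (by simpa using arctan_strictMono.monotone hy) (arctan_lt_pi_div_two y)
  rcases le_total 0 x with h | h
  · rw [abs_of_nonneg h, abs_of_nonneg (by simpa using arctan_strictMono.monotone h)]
    exact key x h
  · rw [abs_of_nonpos h, abs_of_nonpos (by simpa using arctan_strictMono.monotone h)]
    rw [← arctan_neg]
    exact key (-x) (neg_nonneg.2 h)

lemma arg_eq_arctan_of_re_pos {w : ℂ} (hw : 0 < w.re) :
    Complex.arg w = arctan (w.im / w.re) := by
  rw [Complex.arg_of_re_nonneg hw.le, arctan_eq_arcsin]
  congr 1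
  have habs : ‖w‖ = Real.sqrt (w.re ^ 2 + w.im ^ 2) := by
    rw [Complex.norm_def, Complex.normSq_apply]; ring_nf
  have h1 : Real.sqrt (1 + (w.im / w.re) ^ 2) = ‖w‖ / w.re := by
    rw [habs, show (1 : ℝ) + (w.im / w.re) ^ 2 = (w.re ^ 2 + w.im ^ 2) / w.re ^ 2 by
      field_simp]
    rw [Real.sqrt_div (by positivity), Real.sqrt_sq hw.le]
  rw [h1]
  have h2 : (0:ℝ) < ‖w‖ := by
    rw [habs]; positivity
  field_simp

lemma two_delta_le_sin (δ u : ℝ) (hδ0 : 0 < δ) (h1 : δ ≤ u) (h2 : u ≤ 1 - δ) :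
    2 * δ ≤ Real.sin (π * u) := by
  have hπ := Real.pi_pos
  have key : ∀ v : ℝ, δ ≤ v → v ≤ 1/2 → 2 * δ ≤ Real.sin (π * v) := by
    intro v hv1 hv2
    have h := mul_le_sin (x := π * v) (by nlinarith) (by nlinarith)
    have : 2 / π * (π * v) = 2 * v := by field_simp
    rw [this] at h
    linarith
  rcases le_total u (1/2) with h | h
  · exact key u h1 h
  · have : Real.sin (π * u) = Real.sin (π * (1 - u)) := by
      rw [show π * (1 - u) = π - π * u by ring, Real.sin_pi_sub]
    rw [this]
    exact key (1 - u) (by linarith) (by linarith)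

lemma point_bound (δ t θ : ℝ) (hδ0 : 0 < δ) (ht0 : 0 < t) (ht1 : t < 1)
    (hu : Int.fract θ ∈ Set.Icc δ (1 - δ)) :
    |(Complex.log (1 - t * Complex.exp ((2 * π * θ : ℝ) * Complex.I))
      - Complex.log (1 - Complex.exp ((2 * π * θ : ℝ) * Complex.I))).im|
      ≤ (1 - t) / (2 * δ * (1 + t)) := by
  have hπ := Real.pi_pos
  obtain ⟨hu1, hu2⟩ := hu
  set u := Int.fract θ with hu_def
  set s := Real.sin (2 * π * θ) with hs_def
  set c := Real.cos (2 * π * θ) with hc_def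
  have hθ : 2 * π * θ = 2 * π * u + ⌊θ⌋ * (2 * π) := by
    rw [hu_def, Int.fract]; ring
  have hsin : Real.sin (π * u) ≥ 2 * δ := two_delta_le_sin δ u hδ0 hu1 hu2
  have hsin_pos : 0 < Real.sin (π * u) := by linarith
  have hc_eq : c = Real.cos (2 * π * u) := by rw [hc_def, hθ, Real.cos_add_int_mul_two_pi]
  have hs_eq : s = Real.sin (2 * π * u) := by rw [hs_def, hθ, Real.sin_add_int_mul_two_pi]
  have hc1 : 1 - c = 2 * Real.sin (π * u) ^ 2 := by
    rw [hc_eq, show 2 * π * u = 2 * (π * u) by ring, Real.cos_two_mul', Real.sin_sq]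
    ring
  have hs1 : s = 2 * Real.sin (π * u) * Real.cos (π * u) := by
    rw [hs_eq, show 2 * π * u = 2 * (π * u) by ring, Real.sin_two_mul]
  have hcpos : 0 < 1 - c := by rw [hc1]; positivity
  have habs_c : |c| ≤ 1 := by rw [hc_def]; exact Real.abs_cos_le_one _
  have htc : 0 < 1 - t * c := by
    have h1 := (abs_le.mp habs_c).2
    nlinarith
  have hzre : (Complex.exp ((2 * π * θ : ℝ) * Complex.I)).re = c := by
    rw [hc_def]; exact Complex.exp_ofReal_mul_I_re _
  have hzim : (Complex.exp ((2 * π * θ : ℝ) * Complex.I)).im = s := by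
    rw [hs_def]; exact Complex.exp_ofReal_mul_I_im _
  have hre1 : (1 - t * Complex.exp ((2 * π * θ : ℝ) * Complex.I)).re = 1 - t * c := by
    rw [Complex.sub_re, Complex.one_re, Complex.mul_re, Complex.ofReal_re, Complex.ofReal_im,
      hzre, hzim]
    ring
  have him1 : (1 - t * Complex.exp ((2 * π * θ : ℝ) * Complex.I)).im = -(t * s) := by
    rw [Complex.sub_im, Complex.one_im, Complex.mul_im, Complex.ofReal_re, Complex.ofReal_im,
      hzre, hzim]
    ring
  have hre2 : (1 - Complex.exp ((2 * π * θ : ℝ) * Complex.I)).re = 1 - c := by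
    rw [Complex.sub_re, Complex.one_re, hzre]
  have him2 : (1 - Complex.exp ((2 * π * θ : ℝ) * Complex.I)).im = -s := by
    rw [Complex.sub_im, Complex.one_im, hzim]; ring
  rw [Complex.sub_im, Complex.log_im, Complex.log_im,
    arg_eq_arctan_of_re_pos (by rw [hre1]; exact htc),
    arg_eq_arctan_of_re_pos (by rw [hre2]; exact hcpos),
    hre1, him1, hre2, him2]
  set A := s / (1 - c) with hA_def
  set B := t * s / (1 - t * c) with hB_def
  have hAB : 0 ≤ A * B := by
    rw [hA_def, hB_def, div_mul_div_comm, show s * (t * s) = t * s ^ 2 by ring]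
    positivity
  have e1 : -(t * s) / (1 - t * c) = -B := by rw [hB_def]; ring
  have e2 : -s / (1 - c) = -A := by rw [hA_def]; ring
  rw [e1, e2]
  have hrw : arctan (-B) - arctan (-A) = arctan A + arctan (-B) := by
    rw [arctan_neg A, arctan_neg B]; ring
  rw [hrw, arctan_add (by nlinarith)]
  have hsc : s ^ 2 + c ^ 2 = 1 := by
    rw [hs_def, hc_def]; exact Real.sin_sq_add_cos_sq _
  have hpos : 0 < 1 - A * -B := by nlinarith [hAB]
  have hX : (A + -B) / (1 - A * -B) = s * (1 - t) / ((1 - c) * (1 + t)) := by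
    rw [div_eq_div_iff hpos.ne' (by positivity), hA_def, hB_def]
    have htc' : 1 - c * t ≠ 0 := by rw [mul_comm]; exact htc.ne'
    field_simp
    linear_combination (-(s * (1 - t) * t)) * hsc
  rw [hX]
  refine le_trans (abs_arctan_le_abs _) ?_
  rw [abs_div, abs_mul, abs_mul]
  rw [abs_of_pos hcpos, abs_of_pos (by linarith : (0:ℝ) < 1 - t),
    abs_of_pos (by linarith : (0:ℝ) < 1 + t)]
  rw [div_le_div_iff₀ (by positivity) (by positivity)]
  have habs_s : |s| ≤ 2 * Real.sin (π * u) := by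
    rw [hs1, abs_mul, abs_mul]
    rw [abs_of_nonneg (by norm_num : (0:ℝ) ≤ 2), abs_of_pos hsin_pos]
    have h2 := Real.abs_cos_le_one (π * u)
    nlinarith
  have key : |s| * (2 * δ) ≤ 1 - c := by
    rw [hc1]
    nlinarith [abs_nonneg s]
  calc |s| * (1 - t) * (2 * δ * (1 + t)) = (|s| * (2 * δ)) * ((1 - t) * (1 + t)) := by ring
    _ ≤ (1 - c) * ((1 - t) * (1 + t)) := by
        apply mul_le_mul_of_nonneg_right key (by nlinarith)
    _ = (1 - t) * ((1 - c) * (1 + t)) := by ring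

lemma term_im (ρ a : ℝ) (m : ℕ) :
    ((((ρ : ℂ) * Complex.exp ((a : ℝ) * Complex.I)) ^ m / m).im)
      = ρ ^ m * Real.sin (m * a) / m := by
  rw [mul_pow, ← Complex.exp_nat_mul]
  have h : ((ρ:ℂ) ^ m * Complex.exp ((m:ℂ) * ((a:ℝ) * Complex.I))) / (m:ℂ)
      = ((ρ ^ m / m : ℝ) : ℂ) * Complex.exp (((m * a : ℝ) : ℂ) * Complex.I) := by
    push_cast; ring
  rw [h, Complex.mul_im, Complex.ofReal_re, Complex.ofReal_im,
    Complex.exp_ofReal_mul_I_im]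
  ring

/-- For `0 < δ ≤ 1/3`, `0 < t ≤ 1/(1 + 3δ²)`, and `x` such that the fractional parts of
`x − α` and `x − β` lie in `[δ, 1 − δ]`,
`(1/π)|∑_{n=1}^∞ (1 − tⁿ)[sin(2πn(x − α)) − sin(2πn(x − β))]/n| ≤ (1/δ)(1/t − 1)`. -/
theorem tail_difference_bound (δ t α β x : ℝ) (hδ0 : 0 < δ) (hδ : δ ≤ 1 / 3)
    (ht0 : 0 < t) (ht : t ≤ 1 / (1 + 3 * δ ^ 2))
    (hα : Int.fract (x - α) ∈ Set.Icc δ (1 - δ))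
    (hβ : Int.fract (x - β) ∈ Set.Icc δ (1 - δ)) (L : ℝ)
    (hL : Filter.Tendsto
      (fun N => ∑ n ∈ Finset.range N,
        (1 - t ^ (n + 1)) * (Real.sin (2 * Real.pi * (n + 1) * (x - α))
          - Real.sin (2 * Real.pi * (n + 1) * (x - β))) / (n + 1))
      Filter.atTop (nhds L)) :
    (1 / Real.pi) * |L| ≤ (1 / δ) * (1 / t - 1) := by
  have hπ := Real.pi_pos
  have ht1 : t < 1 := by
    refine lt_of_le_of_lt ht ?_
    rw [div_lt_one (by positivity)]
    nlinarith
  set f : ℕ → ℝ := fun n => (1 - t ^ (n + 1)) * (Real.sin (2 * Real.pi * (n + 1) * (x - α))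
          - Real.sin (2 * Real.pi * (n + 1) * (x - β))) / (n + 1) with hf_def
  set zα : ℂ := Complex.exp ((2 * Real.pi * (x - α) : ℝ) * Complex.I) with hzα
  set zβ : ℂ := Complex.exp ((2 * Real.pi * (x - β) : ℝ) * Complex.I) with hzβ
  set S : ℝ → ℝ := fun r =>
    ((Complex.log (1 - (r : ℂ) * t * zα) - Complex.log (1 - (r : ℂ) * zα))
      - (Complex.log (1 - (r : ℂ) * t * zβ) - Complex.log (1 - (r : ℂ) * zβ))).im with hS_def
  -- norms
  have hnormα : ‖zα‖ = 1 := by rw [hzα]; exact Complex.norm_exp_ofReal_mul_I _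
  have hnormβ : ‖zβ‖ = 1 := by rw [hzβ]; exact Complex.norm_exp_ofReal_mul_I _
  -- the series identity
  have hsum : ∀ r : ℝ, r ∈ Set.Ioo (0:ℝ) 1 → HasSum (fun n => f n * r ^ n) (S r / r) := by
    rintro r ⟨hr0, hr1⟩
    have hn1 : ‖(r : ℂ) * zα‖ < 1 := by
      rw [norm_mul, hnormα, Complex.norm_real, Real.norm_eq_abs, abs_of_pos hr0]; simpa
    have hn2 : ‖(r : ℂ) * t * zα‖ < 1 := by
      rw [norm_mul, norm_mul, hnormα, Complex.norm_real, Complex.norm_real,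
        Real.norm_eq_abs, Real.norm_eq_abs, abs_of_pos hr0, abs_of_pos ht0]
      nlinarith
    have hn3 : ‖(r : ℂ) * zβ‖ < 1 := by
      rw [norm_mul, hnormβ, Complex.norm_real, Real.norm_eq_abs, abs_of_pos hr0]; simpa
    have hn4 : ‖(r : ℂ) * t * zβ‖ < 1 := by
      rw [norm_mul, norm_mul, hnormβ, Complex.norm_real, Complex.norm_real,
        Real.norm_eq_abs, Real.norm_eq_abs, abs_of_pos hr0, abs_of_pos ht0]
      nlinarith
    have h1 := Complex.hasSum_taylorSeries_neg_log hn1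
    have h2 := Complex.hasSum_taylorSeries_neg_log hn2
    have h3 := Complex.hasSum_taylorSeries_neg_log hn3
    have h4 := Complex.hasSum_taylorSeries_neg_log hn4
    have hcomb := Complex.hasSum_im ((h1.sub h2).sub (h3.sub h4))
    have hcomb2 : HasSum (fun n : ℕ =>
        (((r : ℂ) * zα) ^ n / (n:ℕ) - ((r : ℂ) * t * zα) ^ n / (n:ℕ)
          - (((r : ℂ) * zβ) ^ n / (n:ℕ) - ((r : ℂ) * t * zβ) ^ n / (n:ℕ))).im) (S r) := by
      convert hcomb using 2
      ring
    have hshift : HasSum (fun n : ℕ =>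
        (((r : ℂ) * zα) ^ (n+1) / ((n+1:ℕ):ℂ) - ((r : ℂ) * t * zα) ^ (n+1) / ((n+1:ℕ):ℂ)
          - (((r : ℂ) * zβ) ^ (n+1) / ((n+1:ℕ):ℂ)
            - ((r : ℂ) * t * zβ) ^ (n+1) / ((n+1:ℕ):ℂ))).im) (S r) := by
      refine (hasSum_nat_add_iff (f := fun n : ℕ =>
        (((r : ℂ) * zα) ^ n / (n:ℕ) - ((r : ℂ) * t * zα) ^ n / (n:ℕ)
          - (((r : ℂ) * zβ) ^ n / (n:ℕ) - ((r : ℂ) * t * zβ) ^ n / (n:ℕ))).im) 1).mpr ?_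
      simpa using hcomb2
    have hdiv := hshift.div_const r
    have hfun : (fun n : ℕ => f n * r ^ n) = (fun n : ℕ =>
        (((r : ℂ) * zα) ^ (n+1) / ((n+1:ℕ):ℂ) - ((r : ℂ) * t * zα) ^ (n+1) / ((n+1:ℕ):ℂ)
          - (((r : ℂ) * zβ) ^ (n+1) / ((n+1:ℕ):ℂ)
            - ((r : ℂ) * t * zβ) ^ (n+1) / ((n+1:ℕ):ℂ))).im / r) := by
      funext n
      have e1 : (r:ℂ) * t * zα = ((r * t : ℝ) : ℂ) * zα := by push_cast; ring
      have e2 : (r:ℂ) * t * zβ = ((r * t : ℝ) : ℂ) * zβ := by push_cast; ring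
      rw [Complex.sub_im, Complex.sub_im, Complex.sub_im, e1, e2, hzα, hzβ,
        term_im, term_im, term_im, term_im]
      have s1 : Real.sin (((n+1:ℕ):ℝ) * (2*Real.pi*(x-α)))
          = Real.sin (2*Real.pi*(↑n+1)*(x-α)) := by congr 1; push_cast; ring
      have s2 : Real.sin (((n+1:ℕ):ℝ) * (2*Real.pi*(x-β)))
          = Real.sin (2*Real.pi*(↑n+1)*(x-β)) := by congr 1; push_cast; ring
      rw [s1, s2, hf_def]
      have hm : ((n+1:ℕ):ℝ) ≠ 0 := by positivity
      push_cast at hm ⊢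
      field_simp
      ring
    rw [hfun]
    exact hdiv
  -- Abel's theorem
  have hAbel := Real.tendsto_tsum_powerSeries_nhdsWithin_lt (f := f) (l := L) hL
  have hmem : Set.Ioo (0:ℝ) 1 ∈ nhdsWithin (1:ℝ) (Set.Iio 1) :=
    Ioo_mem_nhdsLT_of_mem ⟨by norm_num, le_refl 1⟩
  have hev : (fun r : ℝ => ∑' n, f n * r ^ n) =ᶠ[nhdsWithin (1:ℝ) (Set.Iio 1)]
      (fun r => S r / r) :=
    Filter.eventuallyEq_of_mem hmem fun r hr => (hsum r hr).tsum_eq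
  have hAbel2 : Filter.Tendsto (fun r => S r / r) (nhdsWithin (1:ℝ) (Set.Iio 1)) (nhds L) :=
    Filter.Tendsto.congr' hev hAbel
  -- continuity of S r / r at r = 1
  have hcos : ∀ θ : ℝ, Int.fract θ ∈ Set.Icc δ (1 - δ) → Real.cos (2 * π * θ) < 1 := by
    intro θ hu
    have h1 : 2 * π * θ = 2 * π * Int.fract θ + ⌊θ⌋ * (2 * π) := by rw [Int.fract]; ring
    have h2 : Real.cos (2 * π * θ) = Real.cos (2 * π * Int.fract θ) := by
      rw [h1, Real.cos_add_int_mul_two_pi]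
    have hsin := two_delta_le_sin δ (Int.fract θ) hδ0 hu.1 hu.2
    have h3 : Real.cos (2 * π * Int.fract θ) = 1 - 2 * Real.sin (π * Int.fract θ) ^ 2 := by
      rw [show 2 * π * Int.fract θ = 2 * (π * Int.fract θ) by ring, Real.cos_two_mul',
        Real.sin_sq]
      ring
    rw [h2, h3]
    nlinarith
  have hcα := hcos (x - α) hα
  have hcβ := hcos (x - β) hβ
  have hslit : ∀ (τ θ : ℝ), τ * Real.cos (2 * π * θ) < 1 →
      (1 - (τ:ℂ) * Complex.exp ((2 * π * θ : ℝ) * Complex.I)) ∈ Complex.slitPlane := by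
    intro τ θ h
    rw [Complex.mem_slitPlane_iff]
    left
    have hre : (1 - (τ:ℂ) * Complex.exp ((2 * π * θ : ℝ) * Complex.I)).re
        = 1 - τ * Real.cos (2 * π * θ) := by
      rw [Complex.sub_re, Complex.one_re, Complex.mul_re, Complex.ofReal_re, Complex.ofReal_im,
        Complex.exp_ofReal_mul_I_re, Complex.exp_ofReal_mul_I_im]
      ring
    rw [hre]
    linarith
  have htcα : t * Real.cos (2 * π * (x - α)) < 1 := by
    nlinarith [mul_pos ht0 (sub_pos.2 hcα)]
  have htcβ : t * Real.cos (2 * π * (x - β)) < 1 := by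
    nlinarith [mul_pos ht0 (sub_pos.2 hcβ)]
  have hinner : ∀ w : ℂ, Continuous (fun r : ℝ => 1 - (r:ℂ) * w) := by
    intro w
    exact continuous_const.sub ((Complex.continuous_ofReal).mul continuous_const)
  have hinner2 : ∀ w : ℂ, Continuous (fun r : ℝ => 1 - (r:ℂ) * t * w) := by
    intro w
    exact continuous_const.sub (((Complex.continuous_ofReal).mul continuous_const).mul
      continuous_const)
  have hlog1 : ContinuousAt (fun r : ℝ => Complex.log (1 - (r:ℂ) * t * zα)) 1 := by
    have hg : ContinuousAt Complex.log (1 - ((1:ℝ):ℂ) * t * zα) := by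
      refine continuousAt_clog ?_
      rw [show ((1:ℝ):ℂ) = 1 from Complex.ofReal_one, one_mul]
      exact hslit t (x - α) htcα
    exact ContinuousAt.comp (f := fun r : ℝ => 1 - (r:ℂ) * t * zα) (x := (1:ℝ))
      hg (hinner2 zα).continuousAt
  have hlog2 : ContinuousAt (fun r : ℝ => Complex.log (1 - (r:ℂ) * zα)) 1 := by
    have hg : ContinuousAt Complex.log (1 - ((1:ℝ):ℂ) * zα) := by
      refine continuousAt_clog ?_
      rw [show ((1:ℝ):ℂ) = 1 from Complex.ofReal_one, one_mul]
      have h := hslit 1 (x - α) (by simpa using hcα)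
      rwa [Complex.ofReal_one, one_mul] at h
    exact ContinuousAt.comp (f := fun r : ℝ => 1 - (r:ℂ) * zα) (x := (1:ℝ))
      hg (hinner zα).continuousAt
  have hlog3 : ContinuousAt (fun r : ℝ => Complex.log (1 - (r:ℂ) * t * zβ)) 1 := by
    have hg : ContinuousAt Complex.log (1 - ((1:ℝ):ℂ) * t * zβ) := by
      refine continuousAt_clog ?_
      rw [show ((1:ℝ):ℂ) = 1 from Complex.ofReal_one, one_mul]
      exact hslit t (x - β) htcβ
    exact ContinuousAt.comp (f := fun r : ℝ => 1 - (r:ℂ) * t * zβ) (x := (1:ℝ))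
      hg (hinner2 zβ).continuousAt
  have hlog4 : ContinuousAt (fun r : ℝ => Complex.log (1 - (r:ℂ) * zβ)) 1 := by
    have hg : ContinuousAt Complex.log (1 - ((1:ℝ):ℂ) * zβ) := by
      refine continuousAt_clog ?_
      rw [show ((1:ℝ):ℂ) = 1 from Complex.ofReal_one, one_mul]
      have h := hslit 1 (x - β) (by simpa using hcβ)
      rwa [Complex.ofReal_one, one_mul] at h
    exact ContinuousAt.comp (f := fun r : ℝ => 1 - (r:ℂ) * zβ) (x := (1:ℝ))
      hg (hinner zβ).continuousAt
  have hScont : ContinuousAt (fun r : ℝ => S r / r) 1 := by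
    have h1 : ContinuousAt S 1 := by
      rw [hS_def]
      exact Complex.continuous_im.continuousAt.comp (((hlog1.sub hlog2).sub (hlog3.sub hlog4)))
    exact h1.div continuousAt_id one_ne_zero
  have htends2 : Filter.Tendsto (fun r => S r / r) (nhdsWithin (1:ℝ) (Set.Iio 1))
      (nhds (S 1 / 1)) := hScont.tendsto.mono_left nhdsWithin_le_nhds
  have hLS : L = S 1 / 1 := tendsto_nhds_unique hAbel2 htends2
  -- final bound
  have hb1 := point_bound δ t (x - α) hδ0 ht0 ht1 hα
  have hb2 := point_bound δ t (x - β) hδ0 ht0 ht1 hβ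
  rw [← hzα] at hb1
  rw [← hzβ] at hb2
  have hS1 : S 1 = (Complex.log (1 - (t:ℂ) * zα) - Complex.log (1 - zα)).im
      - (Complex.log (1 - (t:ℂ) * zβ) - Complex.log (1 - zβ)).im := by
    rw [hS_def]
    push_cast
    simp only [one_mul, Complex.sub_im]
  have hbound : |L| ≤ (1 - t) / (δ * (1 + t)) := by
    rw [hLS, div_one, hS1]
    refine le_trans (abs_sub _ _) ?_
    have := add_le_add hb1 hb2
    refine le_trans this ?_
    have harith : (1-t)/(2*δ*(1+t)) + (1-t)/(2*δ*(1+t)) = (1-t)/(δ*(1+t)) := by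
      rw [← add_div, show 2*δ*(1+t) = 2*(δ*(1+t)) by ring,
        show (1-t)+(1-t) = 2*(1-t) by ring, mul_div_mul_left _ _ (two_ne_zero)]
    linarith [harith]
  have hπ3 := Real.pi_gt_three
  have hstep : (1/π) * |L| ≤ (1/π) * ((1 - t) / (δ * (1 + t))) :=
    mul_le_mul_of_nonneg_left hbound (by positivity)
  refine le_trans hstep ?_
  have h1t : 1/t - 1 = (1 - t)/t := by field_simp
  rw [h1t, show (1:ℝ)/π * ((1-t)/(δ*(1+t))) = (1*(1-t))/(π*(δ*(1+t))) from
      div_mul_div_comm 1 π (1-t) (δ*(1+t)),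
    show (1:ℝ)/δ * ((1-t)/t) = (1*(1-t))/(δ*t) from div_mul_div_comm 1 δ (1-t) t, one_mul]
  rw [div_le_div_iff₀ (by positivity) (by positivity)]
  nlinarith [mul_pos hδ0 ht0, mul_nonneg (mul_nonneg (sub_pos.2 ht1).le hδ0.le) ht0.le,
    mul_nonneg (sub_pos.2 ht1).le hδ0.le]
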